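/- Let α ∈ (0,1) be irrational, with Gauss iterates α_n and continued-fraction convergents p_n/q_n. Then for every n ≥ 1 the n-th iterate G^n of the Gauss map is differentiable at α with (G^n)'(α) = (−1)^n · ∏_{i=0}^{n−1} α_i^{−2}; in particular |(G^n)'(α)| = (q_{n−1}·α − p_{n−1})^{−2} ≥ 1. -/

import Mathlib

noncomputable def gaussMap (x : ℝ) : ℝ := 1 / x - (⌊1 / x⌋ : ℝ)

lemma gauss_step (x : ℝ) (hx : Irrational x) (h0 : 0 < x) :
    Irrational (gaussMap x) ∧ gaussMap x ∈ Set.Ioo (0:ℝ) 1 := by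
  have hne : x ≠ 0 := ne_of_gt h0
  have h1x : Irrational (1 / x) := by
    rw [one_div]; exact hx.inv
  have hirr : Irrational (gaussMap x) := by
    unfold gaussMap; exact h1x.sub_intCast _
  refine ⟨hirr, ?_, ?_⟩
  · have h1 : (⌊1/x⌋ : ℝ) ≤ 1/x := Int.floor_le _
    have h2 : gaussMap x ≠ 0 := hirr.ne_zero
    have : 0 ≤ gaussMap x := by unfold gaussMap; linarith
    exact lt_of_le_of_ne this (Ne.symm h2)
  · have := Int.lt_floor_add_one (1/x)
    unfold gaussMap; linarith

lemma gauss_deriv (x : ℝ) (hx : Irrational x) (h0 : 0 < x) :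
    HasDerivAt gaussMap (-(x^2)⁻¹) x := by
  have hne : x ≠ 0 := ne_of_gt h0
  have base : HasDerivAt (fun y : ℝ => 1 / y - (⌊1/x⌋ : ℝ)) (-(x^2)⁻¹) x := by
    simpa [one_div] using (hasDerivAt_inv hne).sub_const ((⌊1/x⌋ : ℝ))
  refine base.congr_of_eventuallyEq ?_
  have h1x : Irrational (1 / x) := by rw [one_div]; exact hx.inv
  have hlt : ((⌊1/x⌋ : ℝ)) < 1/x := lt_of_le_of_ne (Int.floor_le _) (Ne.symm (h1x.ne_int _))
  have hlt2 : 1/x < (⌊1/x⌋ : ℝ) + 1 := Int.lt_floor_add_one _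
  have hc : ContinuousAt (fun y : ℝ => 1 / y) x := by
    simpa [one_div] using (continuousAt_inv₀ hne)
  have hmem : {t : ℝ | t ∈ Set.Ioo ((⌊1/x⌋ : ℝ)) ((⌊1/x⌋ : ℝ) + 1)} ∈ nhds (1/x) :=
    isOpen_Ioo.mem_nhds ⟨hlt, hlt2⟩
  filter_upwards [hc.preimage_mem_nhds hmem] with y hy
  have : ⌊1/y⌋ = ⌊1/x⌋ := by
    apply Int.floor_eq_iff.mpr
    exact ⟨le_of_lt hy.1, hy.2⟩
  unfold gaussMap; rw [this]

theorem stmt11 (α : ℝ) (hα : α ∈ Set.Ioo (0 : ℝ) 1) (hirr : Irrational α)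
    (a : ℕ → ℝ) (ha0 : a 0 = α)
    (ha : ∀ n, a (n + 1) = gaussMap (a n))
    (K : ℕ → ℤ) (hK : ∀ n, K n = ⌊1 / a n⌋)
    (p q : ℕ → ℤ) (hp0 : p 0 = 0) (hp1 : p 1 = 1)
    (hq0 : q 0 = 1) (hq1 : q 1 = K 0)
    (hp : ∀ n, p (n + 2) = K (n + 1) * p (n + 1) + p n)
    (hq : ∀ n, q (n + 2) = K (n + 1) * q (n + 1) + q n) :
    ∀ n : ℕ, 1 ≤ n →
      HasDerivAt (gaussMap^[n])
        ((-1) ^ n * (∏ i ∈ Finset.range n, (a i) ^ 2)⁻¹) α ∧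
      |(-1 : ℝ) ^ n * (∏ i ∈ Finset.range n, (a i) ^ 2)⁻¹| =
        (((q (n - 1) : ℝ) * α - (p (n - 1) : ℝ)) ^ 2)⁻¹ ∧
      1 ≤ (((q (n - 1) : ℝ) * α - (p (n - 1) : ℝ)) ^ 2)⁻¹ := by
  -- basic facts about the iterates
  have key : ∀ n, Irrational (a n) ∧ a n ∈ Set.Ioo (0:ℝ) 1 := by
    intro n
    induction n with
    | zero => rw [ha0]; exact ⟨hirr, hα⟩
    | succ m ih =>
      rw [ha m]
      exact gauss_step (a m) ih.1 ih.2.1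
  have hpos : ∀ n, 0 < a n := fun n => (key n).2.1
  have hlt1 : ∀ n, a n < 1 := fun n => (key n).2.2
  -- iterates of gaussMap at α
  have hiter : ∀ n, gaussMap^[n] α = a n := by
    intro n
    induction n with
    | zero => simp [ha0]
    | succ m ih => rw [Function.iterate_succ_apply', ih, ← ha]
  -- derivative of the iterates
  have hderiv : ∀ n, HasDerivAt (gaussMap^[n])
      ((-1) ^ n * (∏ i ∈ Finset.range n, (a i) ^ 2)⁻¹) α := by
    intro n
    induction n with
    | zero => simpa using hasDerivAt_id α
    | succ m ih =>
      have hg : HasDerivAt gaussMap (-((a m)^2)⁻¹) (gaussMap^[m] α) := by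
        rw [hiter m]; exact gauss_deriv (a m) (key m).1 (hpos m)
      have := hg.comp α ih
      rw [show gaussMap ∘ gaussMap^[m] = gaussMap^[m+1] from (Function.iterate_succ' gaussMap m).symm] at this
      refine this.congr_deriv ?_
      rw [Finset.prod_range_succ]
      have h1 : (∏ i ∈ Finset.range m, (a i) ^ 2) ≠ 0 :=
        Finset.prod_ne_zero_iff.mpr fun i _ => pow_ne_zero _ (hpos i).ne'
      have h2 : (a m) ^ 2 ≠ 0 := pow_ne_zero _ (hpos m).ne'
      field_simp
      ring
  -- the product identity
  have hprod : ∀ n, (q n : ℝ) * α - (p n : ℝ) =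
      (-1) ^ n * ∏ i ∈ Finset.range (n + 1), a i := by
    have hKa : ∀ n, a (n + 1) = 1 / a n - (K n : ℝ) := by
      intro n; rw [ha n, hK n]; rfl
    have step : ∀ n, (q n : ℝ) * α - (p n : ℝ) =
        (-1) ^ n * ∏ i ∈ Finset.range (n + 1), a i ∧
        (q (n+1) : ℝ) * α - (p (n+1) : ℝ) =
        (-1) ^ (n+1) * ∏ i ∈ Finset.range (n + 2), a i := by
      intro n
      induction n with
      | zero =>
        constructor
        · simp [hp0, hq0, ha0]
        · rw [hp1, hq1]
          have h1 : a 1 = 1 / a 0 - (K 0 : ℝ) := hKa 0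
          have h0 : a 0 ≠ 0 := (hpos 0).ne'
          rw [Finset.prod_range_succ, Finset.prod_range_one]
          rw [ha0] at h1 h0 ⊢
          rw [h1]
          field_simp
          ring
      | succ m ih =>
        refine ⟨ih.2, ?_⟩
        have hrec : (q (m+2) : ℝ) * α - (p (m+2) : ℝ) =
            (K (m+1) : ℝ) * ((q (m+1) : ℝ) * α - (p (m+1) : ℝ)) +
            ((q m : ℝ) * α - (p m : ℝ)) := by
          rw [hp m, hq m]; push_cast; ring
        rw [hrec, ih.1, ih.2]
        have h1 : a (m+2) = 1 / a (m+1) - (K (m+1) : ℝ) := hKa (m+1)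
        have h2 : a (m+1) ≠ 0 := (hpos (m+1)).ne'
        rw [Finset.prod_range_succ (n := m + 2), Finset.prod_range_succ (n := m + 1), h1]
        field_simp
        ring
    exact fun n => (step n).1
  intro n hn
  obtain ⟨m, rfl⟩ : ∃ m, n = m + 1 := ⟨n - 1, (Nat.succ_pred_eq_of_pos hn).symm⟩
  have hsq : ((q m : ℝ) * α - (p m : ℝ)) ^ 2 =
      ∏ i ∈ Finset.range (m + 1), (a i) ^ 2 := by
    rw [hprod m, mul_pow, ← Finset.prod_pow]
    rw [show ((-1 : ℝ) ^ m) ^ 2 = 1 by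
      rw [← pow_mul, mul_comm, pow_mul]; norm_num]
    ring
  have hP : (0:ℝ) < ∏ i ∈ Finset.range (m + 1), (a i) ^ 2 :=
    Finset.prod_pos fun i _ => pow_pos (hpos i) 2
  have hPle : (∏ i ∈ Finset.range (m + 1), (a i) ^ 2) ≤ 1 :=
    Finset.prod_le_one (fun i _ => (pow_pos (hpos i) 2).le)
      (fun i _ => pow_le_one₀ (hpos i).le (hlt1 i).le)
  refine ⟨hderiv (m+1), ?_, ?_⟩
  · rw [show m + 1 - 1 = m from rfl, hsq, abs_mul, abs_pow, abs_neg, abs_one,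
      one_pow, one_mul, abs_inv, abs_of_pos hP]
  · rw [show m + 1 - 1 = m from rfl, hsq]
    exact one_le_inv_iff₀.mpr ⟨hP, hPle⟩
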